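/- There is a sentence ψ of L_{ω₁,ω} and a structure A such that for every elementary extension B of A satisfying ψ there is a proper elementary extension C of B satisfying ¬ψ, and for every elementary extension B of A satisfying ¬ψ there is a proper elementary extension C of B satisfying ψ. -/

import Mathlib

open FirstOrder

universe u

namespace InfinitaryForcing

variable (L : FirstOrder.Language.{u, u})

/-- Infinitary formulas of `L_{∞,ω}`: set-indexed conjunctions and disjunctions,
finitary quantification, free variables among `Fin n`. -/
inductive InfForm : ℕ → Type (u + 1)
  | equal {n : ℕ} (t₁ t₂ : L.Term (Fin n)) : InfForm n
  | rel {n l : ℕ} (R : L.Relations l) (ts : Fin l → L.Term (Fin n)) : InfForm n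
  | not {n : ℕ} (φ : InfForm n) : InfForm n
  | disj {n : ℕ} {ι : Type u} (Φ : ι → InfForm n) : InfForm n
  | conj {n : ℕ} {ι : Type u} (Φ : ι → InfForm n) : InfForm n
  | ex {n : ℕ} (φ : InfForm (n + 1)) : InfForm n
  | all {n : ℕ} (φ : InfForm (n + 1)) : InfForm n

variable {L}

/-- Tarskian satisfaction for infinitary formulas. -/
def Realize : ∀ {n : ℕ}, InfForm L n → ∀ (M : Type u), L.Structure M → (Fin n → M) → Prop
  | _, .equal t₁ t₂, _M, S, v => letI := S; t₁.realize v = t₂.realize v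
  | _, .rel R ts, _M, S, v => letI := S; Language.Structure.RelMap R fun i => (ts i).realize v
  | _, .not φ, M, S, v => ¬ Realize φ M S v
  | _, .disj Φ, M, S, v => ∃ i, Realize (Φ i) M S v
  | _, .conj Φ, M, S, v => ∀ i, Realize (Φ i) M S v
  | _, .ex φ, M, S, v => ∃ b : M, Realize φ M S (Fin.snoc v b)
  | _, .all φ, M, S, v => ∀ b : M, Realize φ M S (Fin.snoc v b)

/-- Elementary embeddings, with the structures made explicit. -/
abbrev ElemEmb (M N : Type u) (SM : L.Structure M) (SN : L.Structure N) : Type u :=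
  @FirstOrder.Language.ElementaryEmbedding L M N SM SN

/-- The strong forcing relation `A ⊩ ψ(ā)`, where conditions are structures
ordered by elementary extension. -/
def Forces : ∀ {n : ℕ}, InfForm L n → ∀ (M : Type u), L.Structure M → (Fin n → M) → Prop
  | _, .equal t₁ t₂, _M, S, v => letI := S; t₁.realize v = t₂.realize v
  | _, .rel R ts, _M, S, v => letI := S; Language.Structure.RelMap R fun i => (ts i).realize v
  | _, .not φ, M, S, v =>
      ∀ (N : Type u) (SN : L.Structure N) (f : ElemEmb M N S SN),
        ¬ Forces φ N SN (fun i => f.toFun (v i))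
  | _, .disj Φ, M, S, v => ∃ i, Forces (Φ i) M S v
  | _, .conj Φ, M, S, v =>
      ∀ (N : Type u) (SN : L.Structure N) (f : ElemEmb M N S SN) (i : _),
        ∃ (P : Type u) (SP : L.Structure P) (g : ElemEmb N P SN SP),
          Forces (Φ i) P SP (fun k => g.toFun (f.toFun (v k)))
  | _, .ex φ, M, S, v => ∃ b : M, Forces φ M S (Fin.snoc v b)
  | _, .all φ, M, S, v =>
      ∀ (N : Type u) (SN : L.Structure N) (f : ElemEmb M N S SN) (b : N),
        ∃ (P : Type u) (SP : L.Structure P) (g : ElemEmb N P SN SP),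
          Forces φ P SP (Fin.snoc (fun k => g.toFun (f.toFun (v k))) (g.toFun b))

/-- `M` decides `ψ(v)` if it strongly forces `ψ(v)` or `¬ψ(v)`. -/
def Decides {n : ℕ} (ψ : InfForm L n) (M : Type u) (S : L.Structure M) (v : Fin n → M) : Prop :=
  Forces ψ M S v ∨ Forces ψ.not M S v

/-- The weak forcing relation `A ⊩* ψ := A ⊩ ¬¬ψ`. -/
def WForces {n : ℕ} (ψ : InfForm L n) (M : Type u) (S : L.Structure M) (v : Fin n → M) : Prop :=
  Forces ψ.not.not M S v

variable (L)

/-- Finitary (`L_{ω,ω}`) formulas among the infinitary ones. -/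
inductive InfForm.IsFinitary : ∀ {n : ℕ}, InfForm L n → Prop
  | equal {n} (t₁ t₂ : L.Term (Fin n)) : IsFinitary (.equal t₁ t₂)
  | rel {n l} (R : L.Relations l) (ts : Fin l → L.Term (Fin n)) : IsFinitary (.rel R ts)
  | not {n} {φ : InfForm L n} : IsFinitary φ → IsFinitary φ.not
  | disj {n} {ι : Type u} (_ : Finite ι) {Φ : ι → InfForm L n} :
      (∀ i, IsFinitary (Φ i)) → IsFinitary (.disj Φ)
  | conj {n} {ι : Type u} (_ : Finite ι) {Φ : ι → InfForm L n} :
      (∀ i, IsFinitary (Φ i)) → IsFinitary (.conj Φ)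
  | ex {n} {φ : InfForm L (n + 1)} : IsFinitary φ → IsFinitary φ.ex
  | all {n} {φ : InfForm L (n + 1)} : IsFinitary φ → IsFinitary φ.all

/-- Quantifier-free infinitary formulas. -/
inductive InfForm.IsQF : ∀ {n : ℕ}, InfForm L n → Prop
  | equal {n} (t₁ t₂ : L.Term (Fin n)) : IsQF (.equal t₁ t₂)
  | rel {n l} (R : L.Relations l) (ts : Fin l → L.Term (Fin n)) : IsQF (.rel R ts)
  | not {n} {φ : InfForm L n} : IsQF φ → IsQF φ.not
  | disj {n} {ι : Type u} {Φ : ι → InfForm L n} : (∀ i, IsQF (Φ i)) → IsQF (.disj Φ)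
  | conj {n} {ι : Type u} {Φ : ι → InfForm L n} : (∀ i, IsQF (Φ i)) → IsQF (.conj Φ)

/-- `L_{ω₁,ω}` formulas: all conjunctions and disjunctions are countable. -/
inductive InfForm.IsCtble : ∀ {n : ℕ}, InfForm L n → Prop
  | equal {n} (t₁ t₂ : L.Term (Fin n)) : IsCtble (.equal t₁ t₂)
  | rel {n l} (R : L.Relations l) (ts : Fin l → L.Term (Fin n)) : IsCtble (.rel R ts)
  | not {n} {φ : InfForm L n} : IsCtble φ → IsCtble φ.not
  | disj {n} {ι : Type u} (_ : Countable ι) {Φ : ι → InfForm L n} :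
      (∀ i, IsCtble (Φ i)) → IsCtble (.disj Φ)
  | conj {n} {ι : Type u} (_ : Countable ι) {Φ : ι → InfForm L n} :
      (∀ i, IsCtble (Φ i)) → IsCtble (.conj Φ)
  | ex {n} {φ : InfForm L (n + 1)} : IsCtble φ → IsCtble φ.ex
  | all {n} {φ : InfForm L (n + 1)} : IsCtble φ → IsCtble φ.all

/-- A fragment of `L_{∞,ω}`: a family of sets of formulas closed under negation
and subformulas. -/
structure IsFragment (𝔸 : ∀ n : ℕ, Set (InfForm L n)) : Prop where
  not_mem : ∀ {n} {φ : InfForm L n}, φ ∈ 𝔸 n → φ.not ∈ 𝔸 n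
  of_not : ∀ {n} {φ : InfForm L n}, φ.not ∈ 𝔸 n → φ ∈ 𝔸 n
  of_disj : ∀ {n} {ι : Type u} {Φ : ι → InfForm L n}, InfForm.disj Φ ∈ 𝔸 n → ∀ i, Φ i ∈ 𝔸 n
  of_conj : ∀ {n} {ι : Type u} {Φ : ι → InfForm L n}, InfForm.conj Φ ∈ 𝔸 n → ∀ i, Φ i ∈ 𝔸 n
  of_ex : ∀ {n} {φ : InfForm L (n + 1)}, φ.ex ∈ 𝔸 n → φ ∈ 𝔸 (n + 1)
  of_all : ∀ {n} {φ : InfForm L (n + 1)}, φ.all ∈ 𝔸 n → φ ∈ 𝔸 (n + 1)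

variable {L}

/-- `G` is `𝔸`-generic if it decides every instance of every formula of `𝔸`. -/
def IsGeneric (𝔸 : ∀ n : ℕ, Set (InfForm L n)) (G : Type u) (SG : L.Structure G) : Prop :=
  ∀ (n : ℕ) (ψ : InfForm L n), ψ ∈ 𝔸 n → ∀ v : Fin n → G, Decides ψ G SG v

variable (L)

mutual
  /-- Finitary `∃ₙ` formulas: `n` alternating blocks of quantifiers beginning
  with existentials, counting finite conjunctions/disjunctions as free. -/
  inductive IsEx : ℕ → ∀ {k : ℕ}, InfForm L k → Prop
    | equal {m k} (t₁ t₂ : L.Term (Fin k)) : IsEx m (.equal t₁ t₂)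
    | rel {m k l} (R : L.Relations l) (ts : Fin l → L.Term (Fin k)) : IsEx m (.rel R ts)
    | not {m k} {φ : InfForm L k} : IsAll m φ → IsEx m φ.not
    | disj {m k} {ι : Type u} (_ : Finite ι) {Φ : ι → InfForm L k} :
        (∀ i, IsEx m (Φ i)) → IsEx m (.disj Φ)
    | conj {m k} {ι : Type u} (_ : Finite ι) {Φ : ι → InfForm L k} :
        (∀ i, IsEx m (Φ i)) → IsEx m (.conj Φ)
    | ex {m k} {φ : InfForm L (k + 1)} : IsEx m φ → 1 ≤ m → IsEx m φ.ex
    | exStep {m k} {φ : InfForm L (k + 1)} : IsAll m φ → IsEx (m + 1) φ.ex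

  /-- Finitary `∀ₙ` formulas. -/
  inductive IsAll : ℕ → ∀ {k : ℕ}, InfForm L k → Prop
    | equal {m k} (t₁ t₂ : L.Term (Fin k)) : IsAll m (.equal t₁ t₂)
    | rel {m k l} (R : L.Relations l) (ts : Fin l → L.Term (Fin k)) : IsAll m (.rel R ts)
    | not {m k} {φ : InfForm L k} : IsEx m φ → IsAll m φ.not
    | disj {m k} {ι : Type u} (_ : Finite ι) {Φ : ι → InfForm L k} :
        (∀ i, IsAll m (Φ i)) → IsAll m (.disj Φ)
    | conj {m k} {ι : Type u} (_ : Finite ι) {Φ : ι → InfForm L k} :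
        (∀ i, IsAll m (Φ i)) → IsAll m (.conj Φ)
    | all {m k} {φ : InfForm L (k + 1)} : IsAll m φ → 1 ≤ m → IsAll m φ.all
    | allStep {m k} {φ : InfForm L (k + 1)} : IsEx m φ → IsAll (m + 1) φ.all
end

/-- `f : A → B` is an `n`-elementary map (`A ⪯ₙ B` when `f` is an inclusion):
every finitary `∃ₙ` or `∀ₙ` formula transfers along `f`. -/
def IsNElemMap (n : ℕ) {A B : Type u} (SA : L.Structure A) (SB : L.Structure B)
    (f : A → B) : Prop :=
  ∀ (k : ℕ) (φ : InfForm L k), (IsEx L n φ ∨ IsAll L n φ) →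
    ∀ v : Fin k → A, Realize φ A SA v ↔ Realize φ B SB (fun i => f (v i))

/-- `f : A → B` is an elementary map: every finitary formula transfers along `f`. -/
def IsElemMap {A B : Type u} (SA : L.Structure A) (SB : L.Structure B)
    (f : A → B) : Prop :=
  ∀ (k : ℕ) (φ : InfForm L k), InfForm.IsFinitary L φ →
    ∀ v : Fin k → A, Realize φ A SA v ↔ Realize φ B SB (fun i => f (v i))

/-- The relations for the language of blocks: a unary `Q`, unary `P n` for each
`n : ℕ`, and a binary `R`. -/
inductive blockRel : ℕ → Type
  | Q : blockRel 1
  | P (n : ℕ) : blockRel 1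
  | R : blockRel 2

/-- The language with relations `Q`, `R`, and `Pₙ` for `n ∈ ℕ`. -/
def blockLang : FirstOrder.Language.{0, 0} := ⟨fun _ => Empty, blockRel⟩

/-- Binary disjunction of infinitary formulas. -/
def or2 {L : FirstOrder.Language.{0, 0}} {n : ℕ} (φ₁ φ₂ : InfForm L n) : InfForm L n :=
  .disj fun b : Bool => cond b φ₁ φ₂

/-- The sentence `ψ = ∀x (Q(x) → ∃y (R(x,y) ∧ ⋀ₙ ¬Pₙ(y)))`. -/
def psiBlock : InfForm blockLang 0 :=
  .all (or2 (.not (.rel blockRel.Q fun _ => FirstOrder.Language.Term.var 0))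
    (.ex (.conj fun o : Option ℕ =>
      match o with
      | none => .rel blockRel.R
          ![FirstOrder.Language.Term.var 0, FirstOrder.Language.Term.var 1]
      | some m => .not (.rel (blockRel.P m) fun _ => FirstOrder.Language.Term.var 1))))

section Aux

open FirstOrder Language

abbrev rQ : blockLang.Relations 1 := blockRel.Q
abbrev rP (m : ℕ) : blockLang.Relations 1 := blockRel.P m
abbrev rR : blockLang.Relations 2 := blockRel.R

/-- Unary relation `Q` semantically. -/
def QM {M : Type} [blockLang.Structure M] (x : M) : Prop :=
  Structure.RelMap rQ ![x]

def PM (m : ℕ) {M : Type} [blockLang.Structure M] (x : M) : Prop :=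
  Structure.RelMap (rP m) ![x]

def RM {M : Type} [blockLang.Structure M] (x y : M) : Prop :=
  Structure.RelMap rR ![x, y]

def SameP {M : Type} [blockLang.Structure M] (x y : M) : Prop :=
  ∃ z : M, RM z x ∧ RM z y

lemma relmap_one {M : Type} [blockLang.Structure M] (r : blockLang.Relations 1)
    (t : Fin 1 → M) : Structure.RelMap r t ↔ Structure.RelMap r ![t 0] := by
  have h : ![t 0] = t := by funext i; fin_cases i; rfl
  rw [h]

lemma relmap_two {M : Type} [blockLang.Structure M] (r : blockLang.Relations 2)
    (t : Fin 2 → M) : Structure.RelMap r t ↔ Structure.RelMap r ![t 0, t 1] := by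
  have h : ![t 0, t 1] = t := by funext i; fin_cases i <;> rfl
  rw [h]

/-- The standard model: roots `inl k`, children `inr (k, n)` labeled `P n`. -/
def Adom : Type := ℕ ⊕ ℕ × ℕ

instance AStruct : blockLang.Structure Adom where
  funMap := fun {_} f _ => (f : Empty).elim
  RelMap := fun {l} r => match l, r with
    | _, .Q => fun t => ∃ k, t 0 = Sum.inl k
    | _, .P m => fun t => ∃ k, t 0 = Sum.inr (k, m)
    | _, .R => fun t => ∃ k m, t 0 = Sum.inl k ∧ t 1 = Sum.inr (k, m)

lemma AQ_iff (x : Adom) : QM x ↔ ∃ k, x = Sum.inl k := Iff.rfl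
lemma AP_iff (m : ℕ) (x : Adom) : PM m x ↔ ∃ k, x = Sum.inr (k, m) := Iff.rfl
lemma AR_iff (x y : Adom) : RM x y ↔ ∃ k m, x = Sum.inl k ∧ y = Sum.inr (k, m) := Iff.rfl

end Aux
section Axioms

open FirstOrder Language

/-- Semantic axioms shared by the standard model and all of its elementary
extensions. -/
structure Nice (M : Type) [blockLang.Structure M] : Prop where
  rq : ∀ x y : M, RM x y → QM x
  rnq : ∀ x y : M, RM x y → ¬ QM y
  parent_ex : ∀ y : M, ¬ QM y → ∃ x, RM x y
  parent_uniq : ∀ x x' y : M, RM x y → RM x' y → x = x'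
  label_child : ∀ (m : ℕ) (y : M), PM m y → ¬ QM y
  label_uniq : ∀ (m m' : ℕ) (y : M), PM m y → PM m' y → m = m'
  child_ex : ∀ (m : ℕ) (x : M), QM x → ∃ y, RM x y ∧ PM m y
  mchild_uniq : ∀ (m : ℕ) (x y y' : M), RM x y → RM x y' → PM m y → PM m y' → y = y'
  roots_inf : ∀ s : Set M, s.Finite → ∃ x, QM x ∧ x ∉ s

def sQ {n : ℕ} (t : blockLang.Term (Empty ⊕ Fin n)) : blockLang.BoundedFormula Empty n :=
  rQ.boundedFormula₁ t

def sP (m : ℕ) {n : ℕ} (t : blockLang.Term (Empty ⊕ Fin n)) : blockLang.BoundedFormula Empty n :=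
  (rP m).boundedFormula₁ t

def sR {n : ℕ} (t₁ t₂ : blockLang.Term (Empty ⊕ Fin n)) : blockLang.BoundedFormula Empty n :=
  rR.boundedFormula₂ t₁ t₂

def ax1 : blockLang.Sentence := ∀' ∀' (sR &0 &1 ⟹ sQ &0)
def ax2 : blockLang.Sentence := ∀' ∀' (sR &0 &1 ⟹ ∼(sQ &1))
def ax3a : blockLang.Sentence := ∀' (∼(sQ &0) ⟹ ∃' sR &1 &0)
def ax3b : blockLang.Sentence := ∀' ∀' ∀' (sR &0 &2 ⟹ sR &1 &2 ⟹ (&0 =' &1))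
def ax4 (m : ℕ) : blockLang.Sentence := ∀' (sP m &0 ⟹ ∼(sQ &0))
def ax5 (m m' : ℕ) : blockLang.Sentence := ∀' (sP m &0 ⟹ ∼(sP m' &0))
def ax6 (m : ℕ) : blockLang.Sentence := ∀' (sQ &0 ⟹ ∃' (sR &0 &1 ⊓ sP m &1))
def ax7 (m : ℕ) : blockLang.Sentence :=
  ∀' ∀' ∀' (sR &0 &1 ⟹ sR &0 &2 ⟹ sP m &1 ⟹ sP m &2 ⟹ (&1 =' &2))

variable {M : Type} [blockLang.Structure M]

lemma qm_eq (x : M) : Structure.RelMap rQ ![x] = QM x := rfl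
lemma pm_eq (m : ℕ) (x : M) : Structure.RelMap (rP m) ![x] = PM m x := rfl
lemma rm_eq (x y : M) : Structure.RelMap rR ![x, y] = RM x y := rfl

lemma ax1_iff : M ⊨ ax1 ↔ ∀ x y : M, RM x y → QM x := by
  simp [ax1, sR, sQ, Sentence.Realize, Formula.Realize, BoundedFormula.realize_all,
    BoundedFormula.realize_imp, BoundedFormula.realize_rel₂, BoundedFormula.realize_rel₁,
    Term.realize, Fin.snoc, qm_eq, pm_eq, rm_eq]

lemma ax2_iff : M ⊨ ax2 ↔ ∀ x y : M, RM x y → ¬ QM y := by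
  simp [ax2, sR, sQ, Sentence.Realize, Formula.Realize, BoundedFormula.realize_all,
    BoundedFormula.realize_imp, BoundedFormula.realize_not, BoundedFormula.realize_rel₂,
    BoundedFormula.realize_rel₁, Term.realize, Fin.snoc, qm_eq, pm_eq, rm_eq]

lemma ax3a_iff : M ⊨ ax3a ↔ ∀ y : M, ¬ QM y → ∃ x, RM x y := by
  simp [ax3a, sR, sQ, Sentence.Realize, Formula.Realize, BoundedFormula.realize_all,
    BoundedFormula.realize_imp, BoundedFormula.realize_not, BoundedFormula.realize_ex,
    BoundedFormula.realize_rel₂, BoundedFormula.realize_rel₁,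
    Term.realize, Fin.snoc, qm_eq, pm_eq, rm_eq]

lemma ax3b_iff : M ⊨ ax3b ↔ ∀ x x' y : M, RM x y → RM x' y → x = x' := by
  simp [ax3b, sR, Sentence.Realize, Formula.Realize, BoundedFormula.realize_all,
    BoundedFormula.realize_imp, BoundedFormula.realize_bdEqual,
    BoundedFormula.realize_rel₂, Term.realize, Fin.snoc, rm_eq]

lemma ax4_iff (m : ℕ) : M ⊨ ax4 m ↔ ∀ y : M, PM m y → ¬ QM y := by
  simp [ax4, sP, sQ, Sentence.Realize, Formula.Realize, BoundedFormula.realize_all,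
    BoundedFormula.realize_imp, BoundedFormula.realize_not,
    BoundedFormula.realize_rel₁, Term.realize, Fin.snoc, qm_eq, pm_eq]

lemma ax5_iff (m m' : ℕ) : M ⊨ ax5 m m' ↔ ∀ y : M, PM m y → ¬ PM m' y := by
  simp [ax5, sP, Sentence.Realize, Formula.Realize, BoundedFormula.realize_all,
    BoundedFormula.realize_imp, BoundedFormula.realize_not,
    BoundedFormula.realize_rel₁, Term.realize, Fin.snoc, pm_eq]

lemma ax6_iff (m : ℕ) : M ⊨ ax6 m ↔ ∀ x : M, QM x → ∃ y, RM x y ∧ PM m y := by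
  simp [ax6, sR, sQ, sP, Sentence.Realize, Formula.Realize, BoundedFormula.realize_all,
    BoundedFormula.realize_imp, BoundedFormula.realize_ex, BoundedFormula.realize_inf,
    BoundedFormula.realize_rel₂, BoundedFormula.realize_rel₁,
    Term.realize, Fin.snoc, qm_eq, pm_eq, rm_eq]

lemma ax7_iff (m : ℕ) :
    M ⊨ ax7 m ↔ ∀ x y y' : M, RM x y → RM x y' → PM m y → PM m y' → y = y' := by
  simp [ax7, sR, sP, Sentence.Realize, Formula.Realize, BoundedFormula.realize_all,
    BoundedFormula.realize_imp, BoundedFormula.realize_bdEqual,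
    BoundedFormula.realize_rel₂, BoundedFormula.realize_rel₁,
    Term.realize, Fin.snoc, pm_eq, rm_eq]

end Axioms
section NiceA

open FirstOrder Language

lemma A_ax1 : Adom ⊨ ax1 := ax1_iff.2 <| by
  rintro x y ⟨k, m, rfl, rfl⟩; exact ⟨k, rfl⟩
lemma A_ax2 : Adom ⊨ ax2 := ax2_iff.2 <| by
  rintro x y ⟨k, m, rfl, rfl⟩ ⟨k', h⟩; cases h
lemma A_ax3a : Adom ⊨ ax3a := ax3a_iff.2 <| by
  intro y hy
  rcases y with k | ⟨k, m⟩
  · exact absurd ⟨k, rfl⟩ hy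
  · exact ⟨Sum.inl k, k, m, rfl, rfl⟩
lemma A_ax3b : Adom ⊨ ax3b := ax3b_iff.2 <| by
  rintro x x' y ⟨k, m, rfl, rfl⟩ ⟨k', m', rfl, h⟩
  cases h; rfl
lemma A_ax4 (m : ℕ) : Adom ⊨ ax4 m := (ax4_iff m).2 <| by
  rintro y ⟨k, rfl⟩ ⟨k', h⟩; cases h
lemma A_ax5 {m m' : ℕ} (hmm : m ≠ m') : Adom ⊨ ax5 m m' := (ax5_iff m m').2 <| by
  rintro y ⟨k, rfl⟩ ⟨k', h⟩
  injection h with h1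
  exact hmm (congrArg Prod.snd h1)
lemma A_ax6 (m : ℕ) : Adom ⊨ ax6 m := (ax6_iff m).2 <| by
  rintro x ⟨k, rfl⟩
  exact ⟨Sum.inr (k, m), ⟨k, m, rfl, rfl⟩, ⟨k, rfl⟩⟩
lemma A_ax7 (m : ℕ) : Adom ⊨ ax7 m := (ax7_iff m).2 <| by
  rintro x y y' ⟨k, n, rfl, rfl⟩ ⟨k', n', hk, rfl⟩ ⟨a, ha⟩ ⟨a', ha'⟩
  cases hk
  cases ha; cases ha'; rfl

variable {B : Type} [SB : blockLang.Structure B]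

/-- Any elementary extension of the standard model satisfies the axioms. -/
theorem nice_of_elemEmb (f : ElemEmb Adom B AStruct SB) : Nice B := by
  have hax : ∀ σ : blockLang.Sentence, Adom ⊨ σ → B ⊨ σ := fun σ h => (f.map_sentence σ).1 h
  have hq : ∀ k : ℕ, QM (f.toFun (Sum.inl k)) := by
    intro k
    have := f.map_formula' (rQ.formula₁ (Term.var (0 : Fin 1))) (fun _ => (Sum.inl k : Adom))
    exact (Formula.realize_rel₁ ..).1 (this.2 ⟨k, rfl⟩)
  refine ⟨ax1_iff.1 (hax _ A_ax1), ax2_iff.1 (hax _ A_ax2), ax3a_iff.1 (hax _ A_ax3a),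
    ax3b_iff.1 (hax _ A_ax3b), fun m => (ax4_iff m).1 (hax _ (A_ax4 m)),
    ?_, fun m => (ax6_iff m).1 (hax _ (A_ax6 m)),
    fun m => (ax7_iff m).1 (hax _ (A_ax7 m)), ?_⟩
  · intro m m' y hm hm'
    by_contra hne
    exact (ax5_iff m m').1 (hax _ (A_ax5 hne)) y hm hm'
  · intro s hs
    have hinj : Function.Injective (fun k : ℕ => f.toFun (Sum.inl k)) := by
      intro a b hab
      have := f.injective hab
      injection this
    have hrange : (Set.range fun k : ℕ => f.toFun (Sum.inl k)).Infinite :=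
      Set.infinite_range_of_injective hinj
    obtain ⟨x, hx, hxs⟩ := (hrange.diff hs).nonempty
    obtain ⟨k, rfl⟩ := hx
    exact ⟨_, hq k, hxs⟩

end NiceA
section BackForth

open FirstOrder Language

variable {M N : Type} [blockLang.Structure M] [blockLang.Structure N]

/-- Partial `S`-isomorphism data on tuples: a back-and-forth invariant. -/
structure Match (S : Set ℕ) {ι : Type} (v : ι → M) (w : ι → N) : Prop where
  eq : ∀ i j, v i = v j ↔ w i = w j
  q : ∀ i, QM (v i) ↔ QM (w i)
  p : ∀ m ∈ S, ∀ i, PM m (v i) ↔ PM m (w i)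
  r : ∀ i j, RM (v i) (v j) ↔ RM (w i) (w j)
  sp : ∀ i j, SameP (v i) (v j) ↔ SameP (w i) (w j)

lemma Match.symm {S : Set ℕ} {ι : Type} {v : ι → M} {w : ι → N} (h : Match S v w) :
    Match S w v :=
  ⟨fun i j => (h.eq i j).symm, fun i => (h.q i).symm, fun m hm i => (h.p m hm i).symm,
   fun i j => (h.r i j).symm, fun i j => (h.sp i j).symm⟩

lemma Match.precomp {S : Set ℕ} {ι κ : Type} {v : ι → M} {w : ι → N} (h : Match S v w)
    (f : κ → ι) : Match S (v ∘ f) (w ∘ f) :=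
  ⟨fun i j => h.eq (f i) (f j), fun i => h.q (f i), fun m hm i => h.p m hm (f i),
   fun i j => h.r (f i) (f j), fun i j => h.sp (f i) (f j)⟩

lemma samep_comm {x y : M} : SameP x y ↔ SameP y x :=
  ⟨fun ⟨z, h1, h2⟩ => ⟨z, h2, h1⟩, fun ⟨z, h1, h2⟩ => ⟨z, h2, h1⟩⟩

lemma Nice.rm_iff (hN : Nice M) {p y : M} (hp : RM p y) (x : M) : RM x y ↔ x = p :=
  ⟨fun hx => hN.parent_uniq x p y hx hp, fun hx => hx ▸ hp⟩

lemma Nice.samep_iff (hN : Nice M) {b₀ b : M} (hb : RM b₀ b) (x : M) :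
    SameP x b ↔ RM b₀ x := by
  constructor
  · rintro ⟨z, hzx, hzb⟩
    exact (hN.parent_uniq z b₀ b hzb hb) ▸ hzx
  · intro hx
    exact ⟨b₀, hx, hb⟩

lemma Nice.parents_finite (hN : Nice M) {ι : Type} [Finite ι] (w : ι → M) :
    {z : M | ∃ i, RM z (w i)}.Finite := by
  have : {z : M | ∃ i, RM z (w i)} ⊆ ⋃ i, {z : M | RM z (w i)} := by
    rintro z ⟨i, hi⟩; exact Set.mem_iUnion.2 ⟨i, hi⟩
  refine Set.Finite.subset (Set.finite_iUnion fun i => ?_) this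
  exact Set.Subsingleton.finite fun a ha b hb => hN.parent_uniq a b (w i) ha hb

lemma Nice.labels_finite (hN : Nice M) {ι : Type} [Finite ι] (w : ι → M) :
    {m : ℕ | ∃ i, PM m (w i)}.Finite := by
  have : {m : ℕ | ∃ i, PM m (w i)} ⊆ ⋃ i, {m : ℕ | PM m (w i)} := by
    rintro m ⟨i, hi⟩; exact Set.mem_iUnion.2 ⟨i, hi⟩
  refine Set.Finite.subset (Set.finite_iUnion fun i => ?_) this
  exact Set.Subsingleton.finite fun a ha b hb => hN.label_uniq a b (w i) ha hb

lemma Nice.fresh_root (hN : Nice M) {ι : Type} [Finite ι] (w : ι → M) :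
    ∃ c : M, QM c ∧ (∀ i, c ≠ w i) ∧ ∀ i, ¬ RM c (w i) := by
  obtain ⟨c, hc, hcs⟩ := hN.roots_inf (Set.range w ∪ {z : M | ∃ i, RM z (w i)})
    ((Set.finite_range w).union (hN.parents_finite w))
  refine ⟨c, hc, fun i hi => hcs (Or.inl ⟨i, hi.symm⟩), fun i hi => hcs (Or.inr ⟨i, hi⟩)⟩

/-- Extend a matched pair of tuples by one element on the left. -/
lemma Match.cons {S : Set ℕ} {ι : Type} {v : ι → M} {w : ι → N} (h : Match S v w)
    {b : M} {c : N}
    (heq : ∀ i, b = v i ↔ c = w i)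
    (hq : QM b ↔ QM c)
    (hp : ∀ m ∈ S, (PM m b ↔ PM m c))
    (hrbb : RM b b ↔ RM c c)
    (hrbv : ∀ i, RM b (v i) ↔ RM c (w i))
    (hrvb : ∀ i, RM (v i) b ↔ RM (w i) c)
    (hspbb : SameP b b ↔ SameP c c)
    (hspbv : ∀ i, SameP b (v i) ↔ SameP c (w i)) :
    Match S (fun o : Option ι => o.elim b v) (fun o : Option ι => o.elim c w) := by
  constructor
  · rintro (_ | i) (_ | j)
    · exact iff_of_true rfl rfl
    · exact heq j
    · exact eq_comm.trans ((heq i).trans eq_comm)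
    · exact h.eq i j
  · rintro (_ | i)
    · exact hq
    · exact h.q i
  · rintro m hm (_ | i)
    · exact hp m hm
    · exact h.p m hm i
  · rintro (_ | i) (_ | j)
    · exact hrbb
    · exact hrbv j
    · exact hrvb i
    · exact h.r i j
  · rintro (_ | i) (_ | j)
    · exact hspbb
    · exact hspbv j
    · exact samep_comm.trans ((hspbv i).trans samep_comm)
    · exact h.sp i j

/-- The key back-and-forth extension lemma. -/
theorem Match.extend {S : Set ℕ} (hS : S.Finite) (hM : Nice M) (hN : Nice N)
    {ι : Type} [Finite ι] {v : ι → M} {w : ι → N} (h : Match S v w) (b : M) :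
    ∃ c : N, Match S (fun o : Option ι => o.elim b v) (fun o : Option ι => o.elim c w) := by
  classical
  by_cases hbv : ∃ j, b = v j
  · obtain ⟨j, rfl⟩ := hbv
    exact ⟨w j, h.cons (fun i => h.eq j i) (h.q j) (fun m hm => h.p m hm j)
      (h.r j j) (fun i => h.r j i) (fun i => h.r i j) (h.sp j j) (fun i => h.sp j i)⟩
  push_neg at hbv
  by_cases hQb : QM b
  · -- `b` is a root
    by_cases hch : ∃ j, RM b (v j)
    · -- some child of `b` is among the `v`s: take the parent of its image
      obtain ⟨j₀, hj₀⟩ := hch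
      have hnq : ¬ QM (w j₀) := fun hq' => hM.rnq b (v j₀) hj₀ ((h.q j₀).2 hq')
      obtain ⟨c, hc⟩ := hN.parent_ex (w j₀) hnq
      have hQc : QM c := hN.rq c (w j₀) hc
      refine ⟨c, h.cons (fun i => iff_of_false (hbv i) ?_) (iff_of_true hQb hQc)
        (fun m _ => iff_of_false (fun hpm => hM.label_child m b hpm hQb)
          (fun hpm => hN.label_child m c hpm hQc))
        (iff_of_false (fun h' => hM.rnq b b h' hQb) (fun h' => hN.rnq c c h' hQc))
        (fun i => ((hM.samep_iff hj₀ (v i)).symm.trans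
          ((h.sp i j₀).trans (hN.samep_iff hc (w i)))))
        (fun i => iff_of_false (fun h' => hM.rnq (v i) b h' hQb)
          (fun h' => hN.rnq (w i) c h' hQc))
        (iff_of_false (fun ⟨z, hz, _⟩ => hM.rnq z b hz hQb)
          (fun ⟨z, hz, _⟩ => hN.rnq z c hz hQc))
        (fun i => iff_of_false (fun ⟨z, hz, _⟩ => hM.rnq z b hz hQb)
          (fun ⟨z, hz, _⟩ => hN.rnq z c hz hQc))⟩
      intro he
      exact hbv i (hM.parent_uniq (v i) b (v j₀) ((h.r i j₀).2 (he ▸ hc)) hj₀).symm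
    · -- no child of `b` among the `v`s: take a fresh root
      push_neg at hch
      obtain ⟨c, hQc, hcne, hcnr⟩ := hN.fresh_root w
      exact ⟨c, h.cons (fun i => iff_of_false (hbv i) (hcne i)) (iff_of_true hQb hQc)
        (fun m _ => iff_of_false (fun hpm => hM.label_child m b hpm hQb)
          (fun hpm => hN.label_child m c hpm hQc))
        (iff_of_false (fun h' => hM.rnq b b h' hQb) (fun h' => hN.rnq c c h' hQc))
        (fun i => iff_of_false (hch i) (hcnr i))
        (fun i => iff_of_false (fun h' => hM.rnq (v i) b h' hQb)
          (fun h' => hN.rnq (w i) c h' hQc))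
        (iff_of_false (fun ⟨z, hz, _⟩ => hM.rnq z b hz hQb)
          (fun ⟨z, hz, _⟩ => hN.rnq z c hz hQc))
        (fun i => iff_of_false (fun ⟨z, hz, _⟩ => hM.rnq z b hz hQb)
          (fun ⟨z, hz, _⟩ => hN.rnq z c hz hQc))⟩
  · -- `b` is a child, with parent `b₀`
    obtain ⟨b₀, hb₀⟩ := hM.parent_ex b hQb
    -- find an anchor root `c₀` on the other side
    have anchor : ∃ c₀ : N, QM c₀ ∧ (∀ i, w i = c₀ ↔ v i = b₀) ∧
        (∀ i, RM c₀ (w i) ↔ RM b₀ (v i)) := by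
      by_cases hA1 : ∃ j, v j = b₀
      · obtain ⟨j, hj⟩ := hA1
        refine ⟨w j, (h.q j).1 (hj ▸ hM.rq b₀ b hb₀), fun i => ?_, fun i => ?_⟩
        · rw [← hj, ← h.eq i j]
        · rw [← hj, ← h.r j i]
      · push_neg at hA1
        by_cases hA2 : ∃ j, RM b₀ (v j)
        · obtain ⟨j₀, hj₀⟩ := hA2
          have hnq : ¬ QM (w j₀) := fun hq' => hM.rnq b₀ (v j₀) hj₀ ((h.q j₀).2 hq')
          obtain ⟨c₀, hc₀⟩ := hN.parent_ex (w j₀) hnq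
          refine ⟨c₀, hN.rq c₀ (w j₀) hc₀, fun i => ?_, fun i => ?_⟩
          · refine iff_of_false (fun hi => ?_) (hA1 i)
            exact hA1 i (hM.parent_uniq (v i) b₀ (v j₀) ((h.r i j₀).2 (hi ▸ hc₀)) hj₀)
          · rw [← hN.samep_iff hc₀ (w i), ← h.sp i j₀, hM.samep_iff hj₀ (v i)]
        · push_neg at hA2
          obtain ⟨c₀, hQc₀, hc₀ne, hc₀nr⟩ := hN.fresh_root w
          exact ⟨c₀, hQc₀, fun i => iff_of_false (fun hi => hc₀ne i hi.symm) (hA1 i),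
            fun i => iff_of_false (hc₀nr i) (hA2 i)⟩
    obtain ⟨hc₀Q, hc₀eq, hc₀r⟩ := anchor.choose_spec
    set c₀ := anchor.choose with hc₀def
    -- choose a suitable child of `c₀`
    have hchild : ∃ c : N, RM c₀ c ∧ (∀ m ∈ S, (PM m b ↔ PM m c)) ∧ ∀ i, c ≠ w i := by
      by_cases hlab : ∃ m ∈ S, PM m b
      · obtain ⟨m₀, hm₀S, hm₀⟩ := hlab
        obtain ⟨c, hcr, hcp₀⟩ := hN.child_ex m₀ c₀ hc₀Q
        refine ⟨c, hcr, fun m hm => ?_, fun i he => ?_⟩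
        · constructor
          · intro hmb
            exact (hM.label_uniq m m₀ b hmb hm₀) ▸ hcp₀
          · intro hmc
            exact (hN.label_uniq m m₀ c hmc hcp₀) ▸ hm₀
        · refine hbv i (hM.mchild_uniq m₀ b₀ (v i) b ((hc₀r i).1 (he ▸ hcr)) hb₀
            ((h.p m₀ hm₀S i).2 (he ▸ hcp₀)) hm₀).symm
      · push_neg at hlab
        have hfin : (S ∪ {m : ℕ | ∃ i, PM m (w i)}).Finite := hS.union (hN.labels_finite w)
        obtain ⟨m₀, hm₀⟩ := hfin.infinite_compl.nonempty
        have hm₀S : m₀ ∉ S := fun hc => hm₀ (Or.inl hc)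
        have hm₀w : ¬ ∃ i, PM m₀ (w i) := fun hc => hm₀ (Or.inr hc)
        obtain ⟨c, hcr, hcp₀⟩ := hN.child_ex m₀ c₀ hc₀Q
        refine ⟨c, hcr, fun m hm => iff_of_false (hlab m hm) (fun hmc => ?_), fun i he => ?_⟩
        · exact hm₀S ((hN.label_uniq m m₀ c hmc hcp₀) ▸ hm)
        · exact hm₀w ⟨i, he ▸ hcp₀⟩
    obtain ⟨c, hcr, hcp, hcne⟩ := hchild
    have hQc : ¬ QM c := hN.rnq c₀ c hcr
    refine ⟨c, h.cons (fun i => iff_of_false (hbv i) (hcne i)) (iff_of_false hQb hQc)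
      hcp
      (iff_of_false (fun h' => hQb (hM.rq b b h')) (fun h' => hQc (hN.rq c c h')))
      (fun i => iff_of_false (fun h' => hQb (hM.rq b (v i) h'))
        (fun h' => hQc (hN.rq c (w i) h')))
      (fun i => (hM.rm_iff hb₀ (v i)).trans ((hc₀eq i).symm.trans (hN.rm_iff hcr (w i)).symm))
      (iff_of_true ⟨b₀, hb₀, hb₀⟩ ⟨c₀, hcr, hcr⟩)
      (fun i => samep_comm.trans ((hM.samep_iff hb₀ (v i)).trans (((hc₀r i).symm.trans
        (hN.samep_iff hcr (w i)).symm).trans samep_comm)))⟩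

end BackForth
section Transfer

open FirstOrder Language

/-- `P`-labels of relations used by a formula lie in `S`. -/
def relOK (S : Set ℕ) : ∀ {l : ℕ}, blockLang.Relations l → Prop
  | _, .Q => True
  | _, .P m => m ∈ S
  | _, .R => True

inductive UsesOnly (S : Set ℕ) : ∀ {α : Type} {n : ℕ}, blockLang.BoundedFormula α n → Prop
  | falsum {α : Type} {n : ℕ} : UsesOnly S (.falsum : blockLang.BoundedFormula α n)
  | equal {α : Type} {n : ℕ} (t₁ t₂ : blockLang.Term (α ⊕ Fin n)) : UsesOnly S (.equal t₁ t₂)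
  | rel {α : Type} {n l : ℕ} (r : blockLang.Relations l) (ts : Fin l → blockLang.Term (α ⊕ Fin n))
      (h : relOK S r) : UsesOnly S (.rel r ts)
  | imp {α : Type} {n : ℕ} {f g : blockLang.BoundedFormula α n} :
      UsesOnly S f → UsesOnly S g → UsesOnly S (f.imp g)
  | all {α : Type} {n : ℕ} {f : blockLang.BoundedFormula α (n + 1)} :
      UsesOnly S f → UsesOnly S f.all

lemma relOK.mono {S S' : Set ℕ} (hss : S ⊆ S') {l : ℕ} {r : blockLang.Relations l}
    (h : relOK S r) : relOK S' r := by
  cases r with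
  | Q => trivial
  | P m => exact hss h
  | R => trivial

lemma UsesOnly.mono {S S' : Set ℕ} (hss : S ⊆ S') {α : Type} {n : ℕ}
    {φ : blockLang.BoundedFormula α n} (h : UsesOnly S φ) : UsesOnly S' φ := by
  induction h with
  | falsum => exact .falsum
  | equal t₁ t₂ => exact .equal t₁ t₂
  | rel r ts hok => exact .rel r ts (hok.mono hss)
  | imp _ _ ih₁ ih₂ => exact .imp ih₁ ih₂
  | all _ ih => exact .all ih

lemma exists_usesOnly {α : Type} {n : ℕ} (φ : blockLang.BoundedFormula α n) :
    ∃ S : Set ℕ, S.Finite ∧ UsesOnly S φ := by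
  induction φ with
  | falsum => exact ⟨∅, Set.finite_empty, .falsum⟩
  | equal t₁ t₂ => exact ⟨∅, Set.finite_empty, .equal t₁ t₂⟩
  | rel r ts =>
      refine ⟨?_, ?_, ?_⟩
      · exact match r with
          | .Q => ∅
          | .P m => {m}
          | .R => ∅
      · cases r with
        | Q => exact Set.finite_empty
        | P m => exact Set.finite_singleton m
        | R => exact Set.finite_empty
      · cases r with
        | Q => exact .rel _ _ trivial
        | P m => exact .rel _ _ (Set.mem_singleton m)
        | R => exact .rel _ _ trivial
  | imp f g ih₁ ih₂ =>
      obtain ⟨S₁, h₁, hu₁⟩ := ih₁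
      obtain ⟨S₂, h₂, hu₂⟩ := ih₂
      exact ⟨S₁ ∪ S₂, h₁.union h₂, .imp (hu₁.mono Set.subset_union_left)
        (hu₂.mono Set.subset_union_right)⟩
  | all f ih =>
      obtain ⟨S₁, h₁, hu₁⟩ := ih
      exact ⟨S₁, h₁, .all hu₁⟩

lemma term_eq_var {γ : Type} (t : blockLang.Term γ) : ∃ i, t = Term.var i := by
  cases t with
  | var i => exact ⟨i, rfl⟩
  | func f ts => exact (f : Empty).elim

variable {M N : Type} [blockLang.Structure M] [blockLang.Structure N]

/-- Transfer of first-order formulas along matched tuples. -/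
theorem Match.transfer (hM : Nice M) (hN : Nice N) {S : Set ℕ} (hS : S.Finite) :
    ∀ {k n : ℕ} (φ : blockLang.BoundedFormula (Fin k) n), UsesOnly S φ →
      ∀ (e : Fin k → M) (v : Fin n → M) (e' : Fin k → N) (v' : Fin n → N),
        Match S (Sum.elim e v) (Sum.elim e' v') → (φ.Realize e v ↔ φ.Realize e' v') := by
  intro k n φ
  induction φ with
  | falsum => exact fun _ _ _ _ _ _ => Iff.rfl
  | equal t₁ t₂ =>
      intro _ e v e' v' h
      obtain ⟨i₁, rfl⟩ := term_eq_var t₁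
      obtain ⟨i₂, rfl⟩ := term_eq_var t₂
      exact h.eq i₁ i₂
  | rel r ts =>
      intro hu e v e' v' h
      have hok : relOK S r := by cases hu with | rel _ _ hok => exact hok
      have hts : ∀ i, ∃ s, ts i = Term.var s := fun i => term_eq_var (ts i)
      choose s hs using hts
      show Structure.RelMap r (fun i => Term.realize (Sum.elim e v) (ts i)) ↔
        Structure.RelMap r (fun i => Term.realize (Sum.elim e' v') (ts i))
      cases r with
      | Q =>
          show Structure.RelMap rQ _ ↔ Structure.RelMap rQ _
          rw [relmap_one _ (fun i => Term.realize (Sum.elim e v) (ts i)),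
            relmap_one _ (fun i => Term.realize (Sum.elim e' v') (ts i))]
          simp only [hs, Term.realize_var]
          exact h.q (s 0)
      | P m =>
          show Structure.RelMap (rP m) _ ↔ Structure.RelMap (rP m) _
          rw [relmap_one _ (fun i => Term.realize (Sum.elim e v) (ts i)),
            relmap_one _ (fun i => Term.realize (Sum.elim e' v') (ts i))]
          simp only [hs, Term.realize_var]
          exact h.p m hok (s 0)
      | R =>
          show Structure.RelMap rR _ ↔ Structure.RelMap rR _
          rw [relmap_two _ (fun i => Term.realize (Sum.elim e v) (ts i)),
            relmap_two _ (fun i => Term.realize (Sum.elim e' v') (ts i))]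
          simp only [hs, Term.realize_var]
          exact h.r (s 0) (s 1)
  | imp f g ihf ihg =>
      intro hu e v e' v' h
      obtain ⟨hu₁, hu₂⟩ : UsesOnly S f ∧ UsesOnly S g := by
        cases hu with | imp h₁ h₂ => exact ⟨h₁, h₂⟩
      rw [BoundedFormula.realize_imp, BoundedFormula.realize_imp]
      exact imp_congr (ihf hu₁ e v e' v' h) (ihg hu₂ e v e' v' h)
  | @all n' f ihf =>
      intro hu e v e' v' h
      have hu' : UsesOnly S f := by cases hu with | all h' => exact h'
      clear hu
      rw [BoundedFormula.realize_all, BoundedFormula.realize_all]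
      have key : ∀ (b : M) (c : N),
          Match S (fun o : Option (Fin k ⊕ Fin n') => o.elim b (Sum.elim e v))
            (fun o => o.elim c (Sum.elim e' v')) →
          Match S (Sum.elim e (Fin.snoc v b)) (Sum.elim e' (Fin.snoc v' c)) := by
        intro b c hm
        have hρ := hm.precomp (fun x : Fin k ⊕ Fin (n' + 1) =>
          Sum.elim (fun i => some (Sum.inl i))
            (fun j => Fin.lastCases none (fun j' => some (Sum.inr j')) j) x)
        have h1 : ((fun o : Option (Fin k ⊕ Fin n') => o.elim b (Sum.elim e v)) ∘
            (fun x : Fin k ⊕ Fin (n' + 1) => Sum.elim (fun i => some (Sum.inl i))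
              (fun j => Fin.lastCases none (fun j' => some (Sum.inr j')) j) x)) =
            Sum.elim e (Fin.snoc v b) := by
          funext x
          rcases x with i | j
          · rfl
          · refine Fin.lastCases ?_ (fun j' => ?_) j
            · simp [Fin.snoc_last]
            · simp [Fin.snoc_castSucc]
        have h2 : ((fun o : Option (Fin k ⊕ Fin n') => o.elim c (Sum.elim e' v')) ∘
            (fun x : Fin k ⊕ Fin (n' + 1) => Sum.elim (fun i => some (Sum.inl i))
              (fun j => Fin.lastCases none (fun j' => some (Sum.inr j')) j) x)) =
            Sum.elim e' (Fin.snoc v' c) := by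
          funext x
          rcases x with i | j
          · rfl
          · refine Fin.lastCases ?_ (fun j' => ?_) j
            · simp [Fin.snoc_last]
            · simp [Fin.snoc_castSucc]
        rw [h1, h2] at hρ
        exact hρ
      constructor
      · intro H c
        obtain ⟨b, hb⟩ := (h.symm.extend hS hN hM) c
        exact (ihf hu' e (Fin.snoc v b) e' (Fin.snoc v' c) (key b c hb.symm)).1 (H b)
      · intro H b
        obtain ⟨c, hc⟩ := (h.extend hS hM hN) b
        exact (ihf hu' e (Fin.snoc v b) e' (Fin.snoc v' c) (key b c hc)).2 (H c)

/-- Build an elementary embedding from an atom-preserving map. -/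
noncomputable def mkElemEmb {SM : blockLang.Structure M} {SN : blockLang.Structure N}
    (hM : Nice M) (hN : Nice N) (g : M → N)
    (hg : ∀ (S : Set ℕ) (ι : Type) (v : ι → M), Match S v (fun i => g (v i))) :
    ElemEmb M N SM SN where
  toFun := g
  map_formula' := by
    intro n φ x
    obtain ⟨S, hSfin, hSu⟩ := exists_usesOnly φ
    have hm : Match S (Sum.elim x (default : Fin 0 → M))
        (Sum.elim (g ∘ x) (default : Fin 0 → N)) := by
      have := hg S (Fin n ⊕ Fin 0) (Sum.elim x default)
      have he : (fun i : Fin n ⊕ Fin 0 => g (Sum.elim x default i)) =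
          Sum.elim (g ∘ x) (default : Fin 0 → N) := by
        funext i
        rcases i with i | j
        · rfl
        · exact j.elim0
      rwa [he] at this
    exact (Match.transfer hM hN hSfin φ hSu x default (g ∘ x) default hm).symm

end Transfer
section Constructions

open FirstOrder Language

/-- Semantic characterization of `psiBlock`. -/
lemma realize_psi_iff {C : Type} [SC : blockLang.Structure C] :
    Realize psiBlock C SC (fun i => i.elim0) ↔
      ∀ x : C, ¬ QM x ∨ ∃ y : C, RM x y ∧ ∀ m, ¬ PM m y := by
  have h1 : ∀ x : C, (Fin.snoc (fun i : Fin 0 => i.elim0) x : Fin 1 → C) 0 = x := by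
    intro x; simp [Fin.snoc]
  have h20 : ∀ x y : C,
      (Fin.snoc (Fin.snoc (fun i : Fin 0 => i.elim0) x) y : Fin 2 → C) 0 = x := by
    intro x y; simp [Fin.snoc]
  have h21 : ∀ x y : C,
      (Fin.snoc (Fin.snoc (fun i : Fin 0 => i.elim0) x) y : Fin 2 → C) 1 = y := by
    intro x y; simp [Fin.snoc]
  constructor
  · intro h x
    obtain ⟨i, hi⟩ := h x
    cases i with
    | true =>
        left
        intro hq
        apply hi
        show Structure.RelMap rQ _
        rw [relmap_one]
        simp only [Term.realize_var, h1]
        exact hq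
    | false =>
        obtain ⟨y, hy⟩ := hi
        right
        refine ⟨y, ?_, ?_⟩
        · have hr' : Structure.RelMap rR (fun i : Fin 2 =>
              Term.realize (Fin.snoc (Fin.snoc (fun i : Fin 0 => i.elim0) x) y)
                (![Term.var 0, Term.var 1] i)) := hy none
          rw [relmap_two] at hr'
          simpa [Term.realize_var, h20, h21, rm_eq] using hr'
        · intro m hm
          apply hy (some m)
          show Structure.RelMap (rP m) _
          rw [relmap_one]
          simp only [Term.realize_var, h21]
          exact hm
  · intro h x
    rcases h x with hq | ⟨y, hry, hpy⟩
    · refine ⟨true, ?_⟩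
      intro hrel
      apply hq
      have hq' : Structure.RelMap rQ (fun _ : Fin 1 =>
          Term.realize (Fin.snoc (fun i : Fin 0 => i.elim0) x) (Term.var 0)) := hrel
      rw [relmap_one] at hq'
      simpa [Term.realize_var, h1, qm_eq] using hq'
    · refine ⟨false, y, ?_⟩
      intro o
      cases o with
      | none =>
          show Structure.RelMap rR _
          rw [relmap_two]
          simpa [Term.realize_var, h20, h21, rm_eq] using hry
      | some m =>
          show ¬ Structure.RelMap (rP m) _
          rw [relmap_one]
          simp only [Term.realize_var, h21]
          exact hpy m

variable {B : Type} [SB : blockLang.Structure B]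

/-! ### `C₁ = B` plus one fresh standard block (root `inr none`, children `inr (some m)`) -/

instance C1Struct (B : Type) [SB : blockLang.Structure B] :
    blockLang.Structure (B ⊕ Option ℕ) where
  funMap := fun {_} f _ => (f : Empty).elim
  RelMap := fun {l} r => match l, r with
    | _, .Q => fun t => (∃ b : B, t 0 = Sum.inl b ∧ QM b) ∨ t 0 = Sum.inr none
    | _, .P m => fun t => (∃ b : B, t 0 = Sum.inl b ∧ PM m b) ∨ t 0 = Sum.inr (some m)
    | _, .R => fun t => (∃ b b' : B, t 0 = Sum.inl b ∧ t 1 = Sum.inl b' ∧ RM b b') ∨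
        (∃ m : ℕ, t 0 = Sum.inr none ∧ t 1 = Sum.inr (some m))

lemma c1_q_iff (x : B ⊕ Option ℕ) :
    QM x ↔ ((∃ b : B, x = Sum.inl b ∧ QM b) ∨ x = Sum.inr none) := Iff.rfl
lemma c1_p_iff (m : ℕ) (x : B ⊕ Option ℕ) :
    PM m x ↔ ((∃ b : B, x = Sum.inl b ∧ PM m b) ∨ x = Sum.inr (some m)) := Iff.rfl
lemma c1_r_iff (x y : B ⊕ Option ℕ) :
    RM x y ↔ ((∃ b b' : B, x = Sum.inl b ∧ y = Sum.inl b' ∧ RM b b') ∨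
      (∃ m : ℕ, x = Sum.inr none ∧ y = Sum.inr (some m))) := Iff.rfl

lemma c1_q_inl (b : B) : QM (Sum.inl b : B ⊕ Option ℕ) ↔ QM b := by
  rw [c1_q_iff]; simp
lemma c1_p_inl (m : ℕ) (b : B) : PM m (Sum.inl b : B ⊕ Option ℕ) ↔ PM m b := by
  rw [c1_p_iff]; simp
lemma c1_r_inl (b b' : B) :
    RM (Sum.inl b : B ⊕ Option ℕ) (Sum.inl b') ↔ RM b b' := by
  rw [c1_r_iff]; simp

theorem niceC1 (hB : Nice B) : Nice (B ⊕ Option ℕ) := by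
  constructor
  · rintro x y (⟨b, b', rfl, rfl, hr⟩ | ⟨m, rfl, rfl⟩)
    · exact Or.inl ⟨b, rfl, hB.rq b b' hr⟩
    · exact Or.inr rfl
  · rintro x y (⟨b, b', rfl, rfl, hr⟩ | ⟨m, rfl, rfl⟩)
    · rintro (⟨b'', hb, hq⟩ | hb)
      · cases Sum.inl_injective hb
        exact hB.rnq b b' hr hq
      · exact absurd hb (by simp)
    · rintro (⟨b'', hb, hq⟩ | hb)
      · exact absurd hb (by simp)
      · exact absurd hb (by simp)
  · rintro (b | (_ | m)) hq
    · have hqb : ¬ QM b := fun h => hq (Or.inl ⟨b, rfl, h⟩)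
      obtain ⟨x, hx⟩ := hB.parent_ex b hqb
      exact ⟨Sum.inl x, Or.inl ⟨x, b, rfl, rfl, hx⟩⟩
    · exact absurd (Or.inr rfl) hq
    · exact ⟨Sum.inr none, Or.inr ⟨m, rfl, rfl⟩⟩
  · rintro x x' y h1 h2
    rcases (c1_r_iff x y).1 h1 with ⟨b, b', rfl, rfl, hr⟩ | ⟨m, rfl, rfl⟩
    · rcases (c1_r_iff x' (Sum.inl b')).1 h2 with ⟨c, c', hx', hc', hr'⟩ | ⟨m', _, hc'⟩
      · cases Sum.inl_injective hc'
        rw [hx', hB.parent_uniq b c b' hr hr']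
      · exact absurd hc' (by simp)
    · rcases (c1_r_iff x' (Sum.inr (some m))).1 h2 with ⟨c, c', _, hc', _⟩ | ⟨m', hx', _⟩
      · exact absurd hc' (by simp)
      · rw [hx']
  · rintro m y (⟨b, rfl, hp⟩ | rfl)
    · rintro (⟨b', hb, hq⟩ | hb)
      · cases Sum.inl_injective hb
        exact hB.label_child m b hp hq
      · exact absurd hb (by simp)
    · rintro (⟨b', hb, hq⟩ | hb)
      · exact absurd hb (by simp)
      · exact absurd hb (by simp)
  · rintro m m' y (⟨b, rfl, hp⟩ | rfl) <;> rintro (⟨b', hb, hp'⟩ | hb)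
    · cases Sum.inl_injective hb
      exact hB.label_uniq m m' b hp hp'
    · exact absurd hb (by simp)
    · exact absurd hb (by simp)
    · exact Option.some_injective _ (Sum.inr_injective hb)
  · rintro m x (⟨b, rfl, hq⟩ | rfl)
    · obtain ⟨y, hy, hp⟩ := hB.child_ex m b hq
      exact ⟨Sum.inl y, Or.inl ⟨b, y, rfl, rfl, hy⟩, Or.inl ⟨y, rfl, hp⟩⟩
    · exact ⟨Sum.inr (some m), Or.inr ⟨m, rfl, rfl⟩, Or.inr rfl⟩
  · rintro m x y y' (⟨b, b', rfl, rfl, hr⟩ | ⟨m₁, rfl, rfl⟩) <;>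
      rintro (⟨c, c', hc, rfl, hr'⟩ | ⟨m₂, hc, rfl⟩) <;>
      rintro hp hp'
    · cases Sum.inl_injective hc
      rcases hp with (⟨d, hd, hpd⟩ | hd)
      · rcases hp' with (⟨d', hd', hpd'⟩ | hd')
        · cases Sum.inl_injective hd
          cases Sum.inl_injective hd'
          rw [hB.mchild_uniq m b b' c' hr hr' hpd hpd']
        · exact absurd hd' (by simp)
      · exact absurd hd (by simp)
    · exact absurd hc (by simp)
    · exact absurd hc (by simp)
    · rcases hp with (⟨d, hd, hpd⟩ | hd)
      · exact absurd hd (by simp)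
      · rcases hp' with (⟨d', hd', hpd'⟩ | hd')
        · exact absurd hd' (by simp)
        · rw [Sum.inr_injective hd, Sum.inr_injective hd']
  · intro s hs
    obtain ⟨b, hq, hbs⟩ := hB.roots_inf (Sum.inl ⁻¹' s)
      (hs.preimage Sum.inl_injective.injOn)
    exact ⟨Sum.inl b, Or.inl ⟨b, rfl, hq⟩, hbs⟩

lemma matchC1 (S : Set ℕ) (ι : Type) (v : ι → B) :
    Match S v (fun i => (Sum.inl (v i) : B ⊕ Option ℕ)) := by
  constructor
  · intro i j; exact ⟨fun h => h ▸ rfl, fun h => Sum.inl_injective h⟩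
  · intro i; exact (c1_q_inl (v i)).symm
  · intro m _ i; exact (c1_p_inl m (v i)).symm
  · intro i j; exact (c1_r_inl (v i) (v j)).symm
  · intro i j
    constructor
    · rintro ⟨z, hz1, hz2⟩
      exact ⟨Sum.inl z, (c1_r_inl z (v i)).2 hz1, (c1_r_inl z (v j)).2 hz2⟩
    · rintro ⟨z, hz1, hz2⟩
      rcases (c1_r_iff z _).1 hz1 with ⟨b, b', hb, hb', hr⟩ | ⟨m, _, hb'⟩
      · rcases (c1_r_iff z _).1 hz2 with ⟨c, c', hc, hc', hr'⟩ | ⟨m', _, hc'⟩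
        · rw [hb] at hc
          cases Sum.inl_injective hb'.symm
          cases Sum.inl_injective hc'.symm
          cases Sum.inl_injective hc
          exact ⟨b, hr, hr'⟩
        · exact absurd hc' (by simp)
      · exact absurd hb' (by simp)

lemma c1_not_psi :
    ¬ Realize psiBlock (B ⊕ Option ℕ) (C1Struct B) (fun i => i.elim0) := by
  rw [realize_psi_iff]
  intro h
  rcases h (Sum.inr none) with hq | ⟨y, hry, hpy⟩
  · exact hq (Or.inr rfl)
  · rcases (c1_r_iff _ _).1 hry with ⟨b, b', hb, _, _⟩ | ⟨m, _, hy'⟩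
    · exact absurd hb (by simp)
    · exact hpy m ((c1_p_iff m y).2 (Or.inr hy'))

/-! ### `C₂ = B` plus one fresh unlabeled child for every root -/

instance C2Struct (B : Type) [SB : blockLang.Structure B] :
    blockLang.Structure (B ⊕ {x : B // QM x}) where
  funMap := fun {_} f _ => (f : Empty).elim
  RelMap := fun {l} r => match l, r with
    | _, .Q => fun t => ∃ b : B, t 0 = Sum.inl b ∧ QM b
    | _, .P m => fun t => ∃ b : B, t 0 = Sum.inl b ∧ PM m b
    | _, .R => fun t => (∃ b b' : B, t 0 = Sum.inl b ∧ t 1 = Sum.inl b' ∧ RM b b') ∨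
        (∃ x : {x : B // QM x}, t 0 = Sum.inl x.1 ∧ t 1 = Sum.inr x)

lemma c2_q_iff (x : B ⊕ {x : B // QM x}) :
    QM x ↔ ∃ b : B, x = Sum.inl b ∧ QM b := Iff.rfl
lemma c2_p_iff (m : ℕ) (x : B ⊕ {x : B // QM x}) :
    PM m x ↔ ∃ b : B, x = Sum.inl b ∧ PM m b := Iff.rfl
lemma c2_r_iff (x y : B ⊕ {x : B // QM x}) :
    RM x y ↔ ((∃ b b' : B, x = Sum.inl b ∧ y = Sum.inl b' ∧ RM b b') ∨
      (∃ z : {x : B // QM x}, x = Sum.inl z.1 ∧ y = Sum.inr z)) := Iff.rfl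

lemma c2_q_inl (b : B) : QM (Sum.inl b : B ⊕ {x : B // QM x}) ↔ QM b := by
  rw [c2_q_iff]; simp
lemma c2_p_inl (m : ℕ) (b : B) : PM m (Sum.inl b : B ⊕ {x : B // QM x}) ↔ PM m b := by
  rw [c2_p_iff]; simp
lemma c2_r_inl (b b' : B) :
    RM (Sum.inl b : B ⊕ {x : B // QM x}) (Sum.inl b') ↔ RM b b' := by
  rw [c2_r_iff]
  constructor
  · rintro (⟨c, c', hc, hc', hr⟩ | ⟨z, hz, hz'⟩)
    · cases Sum.inl_injective hc
      cases Sum.inl_injective hc'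
      exact hr
    · exact absurd hz' (by simp)
  · intro hr
    exact Or.inl ⟨b, b', rfl, rfl, hr⟩

theorem niceC2 (hB : Nice B) : Nice (B ⊕ {x : B // QM x}) := by
  constructor
  · rintro x y (⟨b, b', rfl, rfl, hr⟩ | ⟨z, rfl, rfl⟩)
    · exact ⟨b, rfl, hB.rq b b' hr⟩
    · exact ⟨z.1, rfl, z.2⟩
  · rintro x y (⟨b, b', rfl, rfl, hr⟩ | ⟨z, rfl, rfl⟩)
    · rintro ⟨b'', hb, hq⟩
      cases Sum.inl_injective hb
      exact hB.rnq b b' hr hq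
    · rintro ⟨b'', hb, hq⟩
      exact absurd hb (by simp)
  · rintro (b | z) hq
    · have hqb : ¬ QM b := fun h => hq ⟨b, rfl, h⟩
      obtain ⟨x, hx⟩ := hB.parent_ex b hqb
      exact ⟨Sum.inl x, Or.inl ⟨x, b, rfl, rfl, hx⟩⟩
    · exact ⟨Sum.inl z.1, Or.inr ⟨z, rfl, rfl⟩⟩
  · rintro x x' y h1 h2
    rcases (c2_r_iff x y).1 h1 with ⟨b, b', rfl, rfl, hr⟩ | ⟨z, rfl, rfl⟩
    · rcases (c2_r_iff x' (Sum.inl b')).1 h2 with ⟨c, c', hx', hc', hr'⟩ | ⟨z', _, hc'⟩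
      · cases Sum.inl_injective hc'
        rw [hx', hB.parent_uniq b c b' hr hr']
      · exact absurd hc' (by simp)
    · rcases (c2_r_iff x' (Sum.inr z)).1 h2 with ⟨c, c', _, hc', _⟩ | ⟨z', hx', hz'⟩
      · exact absurd hc' (by simp)
      · cases Sum.inr_injective hz'
        rw [hx']
  · rintro m y ⟨b, rfl, hp⟩ ⟨b', hb, hq⟩
    cases Sum.inl_injective hb
    exact hB.label_child m b hp hq
  · rintro m m' y ⟨b, rfl, hp⟩ ⟨b', hb, hp'⟩
    cases Sum.inl_injective hb
    exact hB.label_uniq m m' b hp hp'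
  · rintro m x ⟨b, rfl, hq⟩
    obtain ⟨y, hy, hp⟩ := hB.child_ex m b hq
    exact ⟨Sum.inl y, Or.inl ⟨b, y, rfl, rfl, hy⟩, ⟨y, rfl, hp⟩⟩
  · rintro m x y y' (⟨b, b', rfl, rfl, hr⟩ | ⟨z, rfl, rfl⟩) <;>
      rintro (⟨c, c', hc, rfl, hr'⟩ | ⟨z', hc, rfl⟩) <;>
      rintro hp hp'
    · obtain ⟨d, hd, hpd⟩ := hp
      obtain ⟨d', hd', hpd'⟩ := hp'
      cases Sum.inl_injective hc
      cases Sum.inl_injective hd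
      cases Sum.inl_injective hd'
      rw [hB.mchild_uniq m b b' c' hr hr' hpd hpd']
    · obtain ⟨d', hd', hpd'⟩ := hp'
      exact absurd hd' (by simp)
    · obtain ⟨d, hd, hpd⟩ := hp
      exact absurd hd (by simp)
    · obtain ⟨d, hd, hpd⟩ := hp
      exact absurd hd (by simp)
  · intro s hs
    obtain ⟨b, hq, hbs⟩ := hB.roots_inf (Sum.inl ⁻¹' s)
      (hs.preimage Sum.inl_injective.injOn)
    exact ⟨Sum.inl b, ⟨b, rfl, hq⟩, hbs⟩

lemma matchC2 (S : Set ℕ) (ι : Type) (v : ι → B) :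
    Match S v (fun i => (Sum.inl (v i) : B ⊕ {x : B // QM x})) := by
  constructor
  · intro i j; exact ⟨fun h => h ▸ rfl, fun h => Sum.inl_injective h⟩
  · intro i; exact (c2_q_inl (v i)).symm
  · intro m _ i; exact (c2_p_inl m (v i)).symm
  · intro i j; exact (c2_r_inl (v i) (v j)).symm
  · intro i j
    constructor
    · rintro ⟨z, hz1, hz2⟩
      exact ⟨Sum.inl z, (c2_r_inl z (v i)).2 hz1, (c2_r_inl z (v j)).2 hz2⟩
    · rintro ⟨z, hz1, hz2⟩
      rcases (c2_r_iff z _).1 hz1 with ⟨b, b', hb, hb', hr⟩ | ⟨w, _, hb'⟩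
      · rcases (c2_r_iff z _).1 hz2 with ⟨c, c', hc, hc', hr'⟩ | ⟨w', _, hc'⟩
        · rw [hb] at hc
          cases Sum.inl_injective hb'.symm
          cases Sum.inl_injective hc'.symm
          cases Sum.inl_injective hc
          exact ⟨b, hr, hr'⟩
        · exact absurd hc' (by simp)
      · exact absurd hb' (by simp)

lemma c2_psi :
    Realize psiBlock (B ⊕ {x : B // QM x}) (C2Struct B) (fun i => i.elim0) := by
  rw [realize_psi_iff]
  intro x
  by_cases hq : QM x
  · obtain ⟨b, rfl, hb⟩ := (c2_q_iff x).1 hq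
    refine Or.inr ⟨Sum.inr ⟨b, hb⟩, Or.inr ⟨⟨b, hb⟩, rfl, rfl⟩, ?_⟩
    rintro m ⟨b', hb', _⟩
    exact absurd hb' (by simp)
  · exact Or.inl hq

end Constructions
section Main

open FirstOrder Language

lemma psi_ctble : InfForm.IsCtble blockLang psiBlock := by
  refine InfForm.IsCtble.all (InfForm.IsCtble.disj inferInstance fun b => ?_)
  cases b with
  | true => exact InfForm.IsCtble.not (InfForm.IsCtble.rel _ _)
  | false =>
      refine InfForm.IsCtble.ex (InfForm.IsCtble.conj inferInstance fun o => ?_)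
      cases o with
      | none => exact InfForm.IsCtble.rel _ _
      | some m => exact InfForm.IsCtble.not (InfForm.IsCtble.rel _ _)

end Main

/-- There is an `L_{ω₁,ω}` sentence `ψ` and a structure `A` such that every
elementary extension `B ⪰ A` satisfying `ψ` has a proper elementary extension
satisfying `¬ψ`, and every `B ⪰ A` satisfying `¬ψ` has a proper elementary
extension satisfying `ψ`. -/
theorem stmt19 :
    ∃ (ψ : InfForm blockLang 0), InfForm.IsCtble blockLang ψ ∧
      ∃ (A : Type) (SA : blockLang.Structure A),
        ∀ (B : Type) (SB : blockLang.Structure B) (_ : ElemEmb A B SA SB),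
          (Realize ψ B SB (fun i => i.elim0) →
            ∃ (C : Type) (SC : blockLang.Structure C) (g : ElemEmb B C SB SC),
              ¬ Function.Surjective g.toFun ∧ Realize ψ.not C SC (fun i => i.elim0)) ∧
          (Realize ψ.not B SB (fun i => i.elim0) →
            ∃ (C : Type) (SC : blockLang.Structure C) (g : ElemEmb B C SB SC),
              ¬ Function.Surjective g.toFun ∧ Realize ψ C SC (fun i => i.elim0)) := by
  refine ⟨psiBlock, psi_ctble, Adom, AStruct, fun B SB f => ?_⟩
  have hB : Nice B := nice_of_elemEmb f
  constructor
  · intro _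
    refine ⟨B ⊕ Option ℕ, C1Struct B,
      mkElemEmb hB (niceC1 hB) Sum.inl (fun S ι v => matchC1 S ι v), ?_, ?_⟩
    · intro hs
      obtain ⟨b, hb⟩ := hs (Sum.inr none)
      exact absurd (show (Sum.inl b : B ⊕ Option ℕ) = Sum.inr none from hb) (by simp)
    · exact c1_not_psi
  · intro _
    refine ⟨B ⊕ {x : B // QM x}, C2Struct B,
      mkElemEmb hB (niceC2 hB) Sum.inl (fun S ι v => matchC2 S ι v), ?_, ?_⟩
    · intro hs
      obtain ⟨x₀, hx₀, -⟩ := hB.roots_inf ∅ Set.finite_empty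
      obtain ⟨b, hb⟩ := hs (Sum.inr ⟨x₀, hx₀⟩)
      have hb' : Sum.inl b = Sum.inr (⟨x₀, hx₀⟩ : {x : B // QM x}) := hb
      exact absurd hb' (by simp)
    · exact c2_psi

end InfinitaryForcing
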